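/- Let p be a non-constant SONC polynomial in n variables that is S_n-invariant, and let ω ∈ {−1,1}^n. Write V_{>0}(q) for the zero set of a polynomial q in the open positive orthant ℝ_{>0}^n. (1) If p^ω ≠ p̃, then V_{>0}(p^ω) is empty. (2) If p^ω = p̃, then V_{>0}(p^ω) = V_{>0}(p̃), and if this set is non-empty, it is either (a) a singleton {(t,…,t)} with t > 0, or (b) the positive diagonal {(t,…,t) : t > 0}, or (c) the set {x ∈ ℝ_{>0}^n : Π_{i=1}^n x_i = τ} for some constant τ > 0. -/

import Mathlib

open Finset

noncomputable def dotp {n : ℕ} (a x : Fin n → ℝ) : ℝ := ∑ i, a i * x i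

noncomputable def monom {n : ℕ} (α : Fin n → ℕ) (x : Fin n → ℝ) : ℝ := ∏ i, x i ^ α i

/-- The AGE cone `C_AGE(A, β)`: nonnegative signomials supported on `A ∪ {β}` whose
coefficients on `A` are nonnegative (only the `β`-term may be negative). -/
def IsAGE {n : ℕ} (A : Finset (Fin n → ℝ)) (β : Fin n → ℝ) (f : (Fin n → ℝ) → ℝ) : Prop :=
  ∃ c : (Fin n → ℝ) → ℝ, (∀ α ∈ A, 0 ≤ c α) ∧
    (∀ x, f x = (∑ α ∈ A, c α * Real.exp (dotp α x)) + c β * Real.exp (dotp β x)) ∧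
    (∀ x, 0 ≤ f x)

/-- The SAGE cone `C_SAGE(T) = Σ_{β ∈ T} C_AGE(T \ {β}, β)`. -/
def IsSAGE {n : ℕ} (T : Finset (Fin n → ℝ)) (f : (Fin n → ℝ) → ℝ) : Prop :=
  ∃ g : (Fin n → ℝ) → ((Fin n → ℝ) → ℝ),
    (∀ β ∈ T, IsAGE (T.erase β) β (g β)) ∧ (∀ x, f x = ∑ β ∈ T, g β x)

/-- `f^SAGE = sup {l : f - l ∈ C_SAGE(T ∪ {0})}`, as an extended real number. -/
noncomputable def sageBound {n : ℕ} (T : Finset (Fin n → ℝ)) (f : (Fin n → ℝ) → ℝ) : EReal :=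
  sSup ((fun l : ℝ => (l : EReal)) '' {l : ℝ | IsSAGE (insert 0 T) (fun x => f x - l)})

/-- `f* = inf_{x ∈ ℝⁿ} f(x)`, as an extended real number. -/
noncomputable def infStar {n : ℕ} (f : (Fin n → ℝ) → ℝ) : EReal := ⨅ x, (f x : EReal)

/-- The AG cone `C_AG(A, β)` of nonnegative polynomials with nonnegative coefficients
on `A`, vanishing coefficients on non-even points of `A`, and possibly negative
coefficient on `β`. -/
def IsAG {n : ℕ} (A : Finset (Fin n → ℕ)) (β : Fin n → ℕ) (f : (Fin n → ℝ) → ℝ) : Prop :=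
  ∃ c : (Fin n → ℕ) → ℝ, (∀ α ∈ A, 0 ≤ c α) ∧
    (∀ γ ∈ A, (¬ ∀ i, Even (γ i)) → c γ = 0) ∧
    (∀ x, f x = (∑ α ∈ A, c α * monom α x) + c β * monom β x) ∧
    (∀ x, 0 ≤ f x)

/-- The SONC cone `C_SONC(T) = Σ_{β ∈ T} C_AG(T \ {β}, β)`. -/
def IsSONC {n : ℕ} (T : Finset (Fin n → ℕ)) (f : (Fin n → ℝ) → ℝ) : Prop :=
  ∃ g : (Fin n → ℕ) → ((Fin n → ℝ) → ℝ),
    (∀ β ∈ T, IsAG (T.erase β) β (g β)) ∧ (∀ x, f x = ∑ β ∈ T, g β x)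

/-- `f^SONC = sup {l : f - l ∈ C_SONC(T ∪ {0})}`, as an extended real number. -/
noncomputable def soncBound {n : ℕ} (T : Finset (Fin n → ℕ)) (f : (Fin n → ℝ) → ℝ) : EReal :=
  sSup ((fun l : ℝ => (l : EReal)) '' {l : ℝ | IsSONC (insert 0 T) (fun x => f x - l)})

/-- Action of a permutation on a real vector: `(σ·x) i = x (σ⁻¹ i)`. -/
def permAct {n : ℕ} (σ : Equiv.Perm (Fin n)) (x : Fin n → ℝ) : Fin n → ℝ := fun i => x (σ⁻¹ i)

/-- Action of a permutation on an exponent vector. -/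
def permActN {m : ℕ} (σ : Equiv.Perm (Fin m)) (x : Fin m → ℕ) : Fin m → ℕ := fun i => x (σ⁻¹ i)

/-- The orbit of a vector under the symmetric group, as a finite set. -/
noncomputable def orbitF {n : ℕ} (v : Fin n → ℝ) : Finset (Fin n → ℝ) :=
  Finset.univ.image (fun σ : Equiv.Perm (Fin n) => permAct σ v)

/-- The monomial mean `m_α^{(m)}(x) = (1/m!) Σ_{σ ∈ S_m} x^{σ(α)}`. -/
noncomputable def mmean {m : ℕ} (α : Fin m → ℕ) (x : Fin m → ℝ) : ℝ :=
  (1/(m.factorial : ℝ)) * ∑ σ : Equiv.Perm (Fin m), monom (permActN σ α) x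

section AuxLemmas

lemma monom_pos' {n} {α : Fin n → ℕ} {x : Fin n → ℝ} (hx : ∀ i, 0 < x i) : 0 < monom α x :=
  Finset.prod_pos fun i _ => pow_pos (hx i) _

lemma monom_exp' {n} (α : Fin n → ℕ) (x : Fin n → ℝ) (hx : ∀ i, 0 < x i) :
    monom α x = Real.exp (∑ i, (α i : ℝ) * Real.log (x i)) := by
  rw [Real.exp_sum]
  refine Finset.prod_congr rfl fun i _ => ?_
  rw [Real.exp_nat_mul, Real.exp_log (hx i)]

lemma exp_mid_lt' (s u : ℝ) (h : s ≠ u) : Real.exp ((s+u)/2) < (Real.exp s + Real.exp u)/2 := by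
  have h1 : Real.exp (s/2) ≠ Real.exp (u/2) := by
    simp only [ne_eq, Real.exp_eq_exp]; intro hc; exact h (by linarith)
  have h2 : Real.exp ((s+u)/2) = Real.exp (s/2) * Real.exp (u/2) := by
    rw [← Real.exp_add]; ring_nf
  have h3 : Real.exp (s/2) * Real.exp (s/2) = Real.exp s := by rw [← Real.exp_add]; ring_nf
  have h4 : Real.exp (u/2) * Real.exp (u/2) = Real.exp u := by rw [← Real.exp_add]; ring_nf
  have h5 : 0 < (Real.exp (s/2) - Real.exp (u/2))^2 :=
    lt_of_le_of_ne (sq_nonneg _) (Ne.symm (pow_ne_zero 2 (sub_ne_zero.mpr h1)))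
  nlinarith [h5]

lemma exp_mid_le' (s u : ℝ) : Real.exp ((s+u)/2) ≤ (Real.exp s + Real.exp u)/2 := by
  rcases eq_or_ne s u with rfl | h
  · have : (s+s)/2 = s := by ring
    rw [this]; linarith
  · exact (exp_mid_lt' s u h).le

/-- Core equality-case lemma for AGE/AG functions (in exponential form). -/
lemma ag_core' {ι : Type*} (A : Finset ι) (c : ι → ℝ) (hc : ∀ α ∈ A, 0 ≤ c α) (cβ : ℝ)
    (a b : ι → ℝ)
    (h0 : (∑ α ∈ A, c α * Real.exp (a α)) + cβ = 0)
    (hmid : 0 ≤ (∑ α ∈ A, c α * Real.exp ((a α + b α)/2)) + cβ) :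
    ((∑ α ∈ A, c α * Real.exp (b α)) + cβ = 0 ↔ ∀ α ∈ A, 0 < c α → b α = a α) := by
  constructor
  · intro hb
    by_contra hcon
    push_neg at hcon
    obtain ⟨α₀, hα₀A, hα₀c, hα₀ne⟩ := hcon
    have key : ∑ α ∈ A, c α * Real.exp ((a α + b α)/2)
        < ∑ α ∈ A, c α * ((Real.exp (a α) + Real.exp (b α))/2) := by
      refine Finset.sum_lt_sum (fun α hα => ?_) ⟨α₀, hα₀A, ?_⟩
      · exact mul_le_mul_of_nonneg_left (exp_mid_le' _ _) (hc α hα)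
      · exact mul_lt_mul_of_pos_left (exp_mid_lt' _ _ (fun he => hα₀ne he.symm)) hα₀c
    have hsum : ∑ α ∈ A, c α * ((Real.exp (a α) + Real.exp (b α))/2)
        = ((∑ α ∈ A, c α * Real.exp (a α)) + (∑ α ∈ A, c α * Real.exp (b α)))/2 := by
      rw [← Finset.sum_add_distrib, Finset.sum_div]
      exact Finset.sum_congr rfl fun α _ => by ring
    rw [hsum] at key
    have h1 : (∑ α ∈ A, c α * Real.exp (a α)) = -cβ := by linarith
    have h2 : (∑ α ∈ A, c α * Real.exp (b α)) = -cβ := by linarith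
    rw [h1, h2] at key
    linarith
  · intro hba
    have : ∑ α ∈ A, c α * Real.exp (b α) = ∑ α ∈ A, c α * Real.exp (a α) := by
      refine Finset.sum_congr rfl fun α hα => ?_
      rcases (hc α hα).lt_or_eq with hlt | heq
      · rw [hba α hα hlt]
      · rw [← heq]; ring
    rw [this, h0]

/-- Characterization of positive zeros of an AG-shaped nonnegative function. -/
lemma ag_zero' {n : ℕ} (A : Finset (Fin n → ℕ)) (β : Fin n → ℕ) (c : (Fin n → ℕ) → ℝ)
    (hc : ∀ α ∈ A, 0 ≤ c α) (t : ℝ) (f : (Fin n → ℝ) → ℝ)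
    (hf : ∀ x, f x = (∑ α ∈ A, c α * monom α x) + t * monom β x)
    (hnn : ∀ x, 0 ≤ f x)
    (xs : Fin n → ℝ) (hxs : ∀ i, 0 < xs i) (hz : f xs = 0)
    (x : Fin n → ℝ) (hx : ∀ i, 0 < x i) :
    (f x = 0 ↔ ∀ α ∈ A, 0 < c α →
      ∑ i, ((α i : ℝ) - (β i : ℝ)) * (Real.log (x i) - Real.log (xs i)) = 0) := by
  classical
  set L : (Fin n → ℕ) → (Fin n → ℝ) → ℝ :=
    fun γ w => ∑ i, (γ i : ℝ) * Real.log (w i) with hL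
  have hfw : ∀ w : Fin n → ℝ, (∀ i, 0 < w i) →
      f w = Real.exp (L β w) * ((∑ α ∈ A, c α * Real.exp (L α w - L β w)) + t) := by
    intro w hw
    rw [hf, mul_add, Finset.mul_sum]
    congr 1
    · refine Finset.sum_congr rfl fun α hα => ?_
      rw [monom_exp' α w hw, ← mul_assoc, mul_comm (Real.exp (L β w)) (c α), mul_assoc,
        ← Real.exp_add]
      congr 2
      ring
    · rw [monom_exp' β w hw, mul_comm]
  set a : (Fin n → ℕ) → ℝ := fun α => L α xs - L β xs with ha
  set b : (Fin n → ℕ) → ℝ := fun α => L α x - L β x with hb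
  set z : Fin n → ℝ := fun i => Real.sqrt (x i * xs i) with hzdef
  have hzpos : ∀ i, 0 < z i := fun i => Real.sqrt_pos.mpr (mul_pos (hx i) (hxs i))
  have hLz : ∀ γ, L γ z = (L γ x + L γ xs)/2 := by
    intro γ
    have h2 : 2 * L γ z = L γ x + L γ xs := by
      rw [hL]
      simp only []
      rw [Finset.mul_sum, ← Finset.sum_add_distrib]
      refine Finset.sum_congr rfl fun i _ => ?_
      have hlz : Real.log (z i) = (Real.log (x i) + Real.log (xs i))/2 := by
        rw [hzdef]
        simp only []
        rw [Real.log_sqrt (mul_pos (hx i) (hxs i)).le,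
          Real.log_mul (hx i).ne' (hxs i).ne']
      rw [hlz]; ring
    linarith
  have hinner0 : (∑ α ∈ A, c α * Real.exp (a α)) + t = 0 := by
    have h := hz
    rw [hfw xs hxs] at h
    rcases mul_eq_zero.mp h with h | h
    · exact absurd h (Real.exp_ne_zero _)
    · exact h
  have hmid : 0 ≤ (∑ α ∈ A, c α * Real.exp ((a α + b α)/2)) + t := by
    have h1 := hnn z
    rw [hfw z hzpos] at h1
    have h2 : 0 ≤ (∑ α ∈ A, c α * Real.exp (L α z - L β z)) + t :=
      nonneg_of_mul_nonneg_right h1 (Real.exp_pos _)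
    convert h2 using 2
    refine (Finset.sum_congr rfl fun α _ => ?_).symm
    congr 1
    rw [hLz α, hLz β, ha, hb]
    simp only []
    ring
  have hiff : f x = 0 ↔ (∑ α ∈ A, c α * Real.exp (b α)) + t = 0 := by
    rw [hfw x hx]
    constructor
    · intro h
      rcases mul_eq_zero.mp h with h | h
      · exact absurd h (Real.exp_ne_zero _)
      · exact h
    · intro h; rw [h, mul_zero]
  rw [hiff, ag_core' A c hc t a b hinner0 hmid]
  refine forall_congr' fun α => forall_congr' fun hα => forall_congr' fun hcα => ?_
  have hsub : (∑ i, ((α i : ℝ) - (β i : ℝ)) * (Real.log (x i) - Real.log (xs i)))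
      = b α - a α := by
    rw [hb, ha, hL]
    simp only []
    rw [← Finset.sum_sub_distrib, ← Finset.sum_sub_distrib, ← Finset.sum_sub_distrib]
    refine Finset.sum_congr rfl fun i _ => ?_
    ring
  rw [hsub, sub_eq_zero]

lemma monom_mul_left' {n} (γ : Fin n → ℕ) (w x : Fin n → ℝ) :
    monom γ (fun i => w i * x i) = (∏ i, w i ^ γ i) * monom γ x := by
  rw [monom, monom, ← Finset.prod_mul_distrib]
  exact Finset.prod_congr rfl fun i _ => mul_pow _ _ _

lemma monom_perm' {n} (γ : Fin n → ℕ) (σ : Equiv.Perm (Fin n)) (x : Fin n → ℝ) :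
    monom γ (permAct σ x) = monom (fun i => γ (σ i)) x := by
  rw [monom, monom]
  rw [← Equiv.prod_comp σ (fun i => (permAct σ x) i ^ γ i)]
  refine Finset.prod_congr rfl fun i _ => ?_
  simp [permAct]

lemma monom_flip' {n} (γ : Fin n → ℕ) (i₀ : Fin n) (x : Fin n → ℝ) :
    monom γ (fun i => if i = i₀ then -(x i) else x i) = (-1 : ℝ)^(γ i₀) * monom γ x := by
  rw [monom, monom]
  rw [← Finset.mul_prod_erase univ _ (mem_univ i₀), ← Finset.mul_prod_erase univ
    (fun i => x i ^ γ i) (mem_univ i₀)]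
  rw [if_pos rfl, neg_pow, mul_assoc]
  congr 2
  refine Finset.prod_congr rfl fun i hi => ?_
  rw [if_neg (Finset.ne_of_mem_erase hi)]

lemma sign_prod_cases' {n} (ω : Fin n → ℝ) (hω : ∀ i, ω i = 1 ∨ ω i = -1) (γ : Fin n → ℕ) :
    (∏ i, ω i ^ γ i) = 1 ∨ (∏ i, ω i ^ γ i) = -1 := by
  refine Finset.prod_induction _ (fun r => r = 1 ∨ r = -1) ?_ (Or.inl rfl) ?_
  · rintro a b (rfl | rfl) (rfl | rfl) <;> simp
  · intro i _
    rcases hω i with h | h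
    · rw [h]; left; exact one_pow _
    · rw [h]
      rcases Nat.even_or_odd (γ i) with he | ho
      · left; exact he.neg_one_pow
      · right; exact ho.neg_one_pow

lemma sign_prod_even' {n} (ω : Fin n → ℝ) (hω : ∀ i, ω i = 1 ∨ ω i = -1) (γ : Fin n → ℕ)
    (he : ∀ i, Even (γ i)) : (∏ i, ω i ^ γ i) = 1 := by
  refine Finset.prod_eq_one fun i _ => ?_
  rcases hω i with h | h
  · rw [h, one_pow]
  · rw [h, (he i).neg_one_pow]

/-- Linear independence of monomial functions. -/
lemma monom_indep' {n : ℕ} (S : Finset (Fin n → ℕ)) (d : (Fin n → ℕ) → ℝ)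
    (h : ∀ x, ∑ α ∈ S, d α * monom α x = 0) : ∀ α ∈ S, d α = 0 := by
  classical
  intro α₀ hα₀
  set toF : (Fin n → ℕ) ≃ (Fin n →₀ ℕ) := Finsupp.equivFunOnFinite.symm with htoF
  set P : MvPolynomial (Fin n) ℝ := ∑ α ∈ S, MvPolynomial.monomial (toF α) (d α) with hP
  have heval : ∀ x, MvPolynomial.eval x P = ∑ α ∈ S, d α * monom α x := by
    intro x
    rw [hP, map_sum]
    refine Finset.sum_congr rfl fun α hα => ?_
    rw [MvPolynomial.eval_monomial]
    congr 1
    rw [Finsupp.prod, monom]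
    apply Finset.prod_subset (Finset.subset_univ _)
    intro i _ hi
    have h0 : (toF α) i = 0 := by
      by_contra hne
      exact hi (Finsupp.mem_support_iff.mpr hne)
    have h1 : (toF α) i = α i := by simp [htoF]
    rw [h1] at h0
    rw [h1, h0, pow_zero]
  have hP0 : P = 0 := by
    apply MvPolynomial.funext
    intro x
    rw [heval, h x, map_zero]
  have hco := congrArg (MvPolynomial.coeff (toF α₀)) hP0
  rw [hP, MvPolynomial.coeff_zero, MvPolynomial.coeff_sum, Finset.sum_eq_single α₀] at hco
  · rwa [MvPolynomial.coeff_monomial, if_pos rfl] at hco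
  · intro β hβ hne
    rw [MvPolynomial.coeff_monomial, if_neg (fun hc => hne (toF.injective hc))]
  · intro h'; exact absurd hα₀ h'

end AuxLemmas

lemma ptil_symm {n : ℕ} (T : Finset (Fin n → ℕ)) (c : (Fin n → ℕ) → ℝ)
    (p : (Fin n → ℝ) → ℝ) (hp : ∀ x, p x = ∑ α ∈ T, c α * monom α x)
    (hsym : ∀ σ : Equiv.Perm (Fin n), ∀ x, p (permAct σ x) = p x)
    (σ : Equiv.Perm (Fin n)) (x : Fin n → ℝ) :
    (∑ α ∈ T, (if (∀ i, Even (α i)) then c α else -|c α|) * monom α (permAct σ x)) =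
    (∑ α ∈ T, (if (∀ i, Even (α i)) then c α else -|c α|) * monom α x) := by
  classical
  set ch : (Fin n → ℕ) → ℝ := fun γ => if γ ∈ T then c γ else 0 with hch
  have hchT : ∀ γ ∈ T, ch γ = c γ := fun γ hγ => by rw [hch]; simp [hγ]
  have hchN : ∀ γ, γ ∉ T → ch γ = 0 := fun γ hγ => by rw [hch]; simp [hγ]
  -- Step 1 : the (extended) coefficients are symmetric
  have step1 : ∀ τ : Equiv.Perm (Fin n), ∀ γ : Fin n → ℕ,
      ch (fun i => γ (τ i)) = ch γ := by
    intro τ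
    set m : (Fin n → ℕ) → (Fin n → ℕ) := fun γ => fun i => γ (τ⁻¹ i) with hm
    have hinj : Function.Injective m := by
      intro γ1 γ2 h
      funext j
      have := congrFun h (τ j)
      simpa [hm] using this
    set S : Finset (Fin n → ℕ) := T ∪ T.image m with hS
    have hmem : ∀ γ : Fin n → ℕ, (fun i => γ (τ i)) ∈ T → γ ∈ T.image m := by
      intro γ hγ
      refine Finset.mem_image.mpr ⟨_, hγ, ?_⟩
      funext j
      simp [hm]
    have key : ∀ y, ∑ γ ∈ S, (ch (fun i => γ (τ i)) - ch γ) * monom γ y = 0 := by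
      intro y
      have e1 : ∑ γ ∈ S, ch (fun i => γ (τ i)) * monom γ y = p (permAct τ⁻¹ y) := by
        have s1 : ∑ γ ∈ S, ch (fun i => γ (τ i)) * monom γ y
            = ∑ γ ∈ T.image m, ch (fun i => γ (τ i)) * monom γ y := by
          refine (Finset.sum_subset ?_ ?_).symm
          · rw [hS]; exact Finset.subset_union_right
          · intro γ hγS hγI
            have : ch (fun i => γ (τ i)) = 0 := hchN _ (fun hc => hγI (hmem γ hc))
            rw [this, zero_mul]
        have r1 : ∀ α ∈ T, (ch fun i => m α (τ i)) * monom (m α) y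
            = c α * monom α (permAct τ⁻¹ y) := by
          intro α hα
          rw [monom_perm']
          have h2 : (fun i => (m α) (τ i)) = α := by funext j; simp [hm]
          have h1 : (fun i => α (τ⁻¹ i)) = m α := rfl
          rw [h1, h2, hchT α hα]
        rw [s1, Finset.sum_image (fun γ1 h1 γ2 h2 h => hinj h), hp (permAct τ⁻¹ y)]
        exact Finset.sum_congr rfl r1
      have e2 : ∑ γ ∈ S, ch γ * monom γ y = p y := by
        rw [hp y]
        have s1 : ∑ γ ∈ S, ch γ * monom γ y = ∑ γ ∈ T, ch γ * monom γ y := by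
          refine (Finset.sum_subset ?_ ?_).symm
          · rw [hS]; exact Finset.subset_union_left
          · intro γ _ hγT
            rw [hchN γ hγT, zero_mul]
        rw [s1]
        exact Finset.sum_congr rfl fun γ hγ => by rw [hchT γ hγ]
      have e3 : p (permAct τ⁻¹ y) = p y := hsym τ⁻¹ y
      calc ∑ γ ∈ S, (ch (fun i => γ (τ i)) - ch γ) * monom γ y
          = (∑ γ ∈ S, ch (fun i => γ (τ i)) * monom γ y)
            - ∑ γ ∈ S, ch γ * monom γ y := by
            rw [← Finset.sum_sub_distrib]
            exact Finset.sum_congr rfl fun γ _ => by ring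
        _ = 0 := by rw [e1, e2, e3, sub_self]
    intro γ
    by_cases hγS : γ ∈ S
    · have := monom_indep' S _ key γ hγS
      linarith [this]
    · have h1 : γ ∉ T := fun hc => hγS (by rw [hS]; exact Finset.mem_union_left _ hc)
      have h2 : (fun i => γ (τ i)) ∉ T := by
        intro hc
        exact hγS (by rw [hS]; exact Finset.mem_union_right _ (hmem γ hc))
      rw [hchN _ h1, hchN _ h2]
  -- the symmetrized sign-flipped coefficients
  set sg : (Fin n → ℕ) → ℝ := fun γ => if (∀ i, Even (γ i)) then ch γ else -|ch γ| with hsg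
  have hsgT : ∀ γ ∈ T, sg γ = if (∀ i, Even (γ i)) then c γ else -|c γ| := by
    intro γ hγ
    rw [hsg]
    simp only [hchT γ hγ]
  have hsg0 : ∀ γ, ch γ = 0 → sg γ = 0 := by
    intro γ h
    rw [hsg]
    simp [h]
  have hsgστ : ∀ γ : Fin n → ℕ, sg (fun i => γ (σ i)) = sg γ := by
    intro γ
    rw [hsg]
    simp only []
    have heven : (∀ i, Even (γ (σ i))) ↔ (∀ i, Even (γ i)) := by
      constructor
      · intro h i
        have := h (σ⁻¹ i)
        simpa using this
      · intro h i
        exact h (σ i)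
    rw [step1 σ γ]
    by_cases he : ∀ i, Even (γ i)
    · rw [if_pos (heven.mpr he), if_pos he]
    · rw [if_neg (fun hc => he (heven.mp hc)), if_neg he]
  -- Step 3 : conclude
  set m' : (Fin n → ℕ) → (Fin n → ℕ) := fun γ => fun i => γ (σ i) with hm'
  have hinj' : Function.Injective m' := by
    intro γ1 γ2 h
    funext j
    have := congrFun h (σ⁻¹ j)
    simpa [hm'] using this
  set U : Finset (Fin n → ℕ) := T ∪ T.image m' with hU
  have lhs1 : ∑ α ∈ T, (if (∀ i, Even (α i)) then c α else -|c α|) * monom α (permAct σ x)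
      = ∑ δ ∈ T.image m', sg δ * monom δ x := by
    rw [Finset.sum_image (fun γ1 h1 γ2 h2 h => hinj' h)]
    refine Finset.sum_congr rfl fun α hα => ?_
    rw [monom_perm']
    rw [hsgστ α, hsgT α hα]
  have lhs2 : ∑ δ ∈ T.image m', sg δ * monom δ x = ∑ δ ∈ U, sg δ * monom δ x := by
    refine Finset.sum_subset ?_ ?_
    · rw [hU]; exact Finset.subset_union_right
    · intro δ hδU hδI
      have hd : ch δ = 0 := by
        have h1 : (fun i => δ (σ⁻¹ i)) ∉ T := by
          intro hc
          refine hδI (Finset.mem_image.mpr ⟨_, hc, ?_⟩)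
          funext j
          simp [hm']
        have h2 := step1 σ (fun i' => δ (σ⁻¹ i'))
        simp only [show ∀ i, σ⁻¹ (σ i) = i from fun i => by simp] at h2
        rw [h2, hchN _ h1]
      rw [hsg0 δ hd, zero_mul]
  have rhs1 : ∑ α ∈ T, (if (∀ i, Even (α i)) then c α else -|c α|) * monom α x
      = ∑ δ ∈ U, sg δ * monom δ x := by
    refine (Finset.sum_congr rfl fun γ hγ => by rw [← hsgT γ hγ]).trans ?_
    refine Finset.sum_subset ?_ ?_
    · rw [hU]; exact Finset.subset_union_left
    · intro δ hδU hδT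
      rw [hsg0 δ (hchN δ hδT), zero_mul]
  rw [lhs1, lhs2, rhs1]

/-- Zeroes of symmetric SONC polynomials in the open positive orthant:
(1) if `p^ω ≠ p̃` then `p^ω` has no positive zero;
(2) if `p^ω = p̃` and the positive zero set is nonempty, it is a singleton on the
diagonal, the positive diagonal, or `{x > 0 : Π xᵢ = τ}` for some `τ > 0`. -/
theorem stmt7 {n : ℕ} (T : Finset (Fin n → ℕ)) (c : (Fin n → ℕ) → ℝ)
    (p : (Fin n → ℝ) → ℝ) (hp : ∀ x, p x = ∑ α ∈ T, c α * monom α x)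
    (hSONC : IsSONC T p)
    (hsym : ∀ σ : Equiv.Perm (Fin n), ∀ x, p (permAct σ x) = p x)
    (hnc : ¬ ∃ k : ℝ, ∀ x, p x = k)
    (ω : Fin n → ℝ) (hω : ∀ i, ω i = 1 ∨ ω i = -1)
    (pω : (Fin n → ℝ) → ℝ) (hpω : ∀ x, pω x = p (fun i => ω i * x i))
    (ptil : (Fin n → ℝ) → ℝ)
    (hptil : ∀ x, ptil x = ∑ α ∈ T,
      (if (∀ i, Even (α i)) then c α else -|c α|) * monom α x) :
    (pω ≠ ptil → {x : Fin n → ℝ | (∀ i, 0 < x i) ∧ pω x = 0} = ∅) ∧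
    (pω = ptil →
      ({x : Fin n → ℝ | (∀ i, 0 < x i) ∧ pω x = 0}
        = {x : Fin n → ℝ | (∀ i, 0 < x i) ∧ ptil x = 0}) ∧
      ({x : Fin n → ℝ | (∀ i, 0 < x i) ∧ pω x = 0}.Nonempty →
        (∃ t : ℝ, 0 < t ∧
          {x : Fin n → ℝ | (∀ i, 0 < x i) ∧ pω x = 0} = {fun _ => t}) ∨
        ({x : Fin n → ℝ | (∀ i, 0 < x i) ∧ pω x = 0}
          = {x | ∃ t : ℝ, 0 < t ∧ x = fun _ => t}) ∨
        (∃ τ : ℝ, 0 < τ ∧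
          {x : Fin n → ℝ | (∀ i, 0 < x i) ∧ pω x = 0}
            = {x | (∀ i, 0 < x i) ∧ ∏ i, x i = τ}))) := by
  classical
  have hωinv : ∀ xx : Fin n → ℝ, (fun i => ω i * (ω i * xx i)) = xx := by
    intro xx
    funext i
    rcases hω i with h | h <;> rw [h] <;> ring
  have hn : 0 < n := by
    rcases Nat.eq_zero_or_pos n with h0 | h
    · exfalso
      apply hnc
      subst h0
      refine ⟨p (fun i => i.elim0), fun x => ?_⟩
      have hxe : x = (fun i => i.elim0) := by funext i; exact i.elim0
      rw [hxe]
    · exact h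
  obtain ⟨g, hg1, hg2⟩ := hSONC
  have Hcc : ∀ β : Fin n → ℕ, ∃ cb : (Fin n → ℕ) → ℝ, β ∈ T →
      ((∀ α ∈ T.erase β, 0 ≤ cb α) ∧ (∀ γ ∈ T.erase β, (¬ ∀ i, Even (γ i)) → cb γ = 0) ∧
       (∀ x, g β x = (∑ α ∈ T.erase β, cb α * monom α x) + cb β * monom β x) ∧
       (∀ x, 0 ≤ g β x)) := by
    intro β
    by_cases hβ : β ∈ T
    · obtain ⟨cb, h1, h2, h3, h4⟩ := hg1 β hβ
      exact ⟨cb, fun _ => ⟨h1, h2, h3, h4⟩⟩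
    · exact ⟨0, fun h => absurd h hβ⟩
  choose cc hcc using Hcc
  set tb : (Fin n → ℕ) → ℝ :=
    fun β => if (∀ i, Even (β i)) then cc β β else -|cc β β| with htb
  set hfun : (Fin n → ℕ) → (Fin n → ℝ) → ℝ :=
    fun β x => (∑ α ∈ T.erase β, cc β α * monom α x) + tb β * monom β x with hhfun
  -- nonnegativity of the sign-flipped AG pieces
  have hhnn : ∀ β ∈ T, ∀ x, 0 ≤ hfun β x := by
    intro β hβ x
    by_cases hev : ∀ i, Even (β i)
    · have he : hfun β x = g β x := by
        rw [(hcc β hβ).2.2.1 x, hhfun]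
        simp only [htb, if_pos hev]
      rw [he]
      exact (hcc β hβ).2.2.2 x
    · rcases le_or_gt (cc β β) 0 with hle | hlt
      · have htbeq : tb β = cc β β := by
          rw [htb]
          simp only [if_neg hev]
          rw [abs_of_nonpos hle, neg_neg]
        have he : hfun β x = g β x := by
          rw [(hcc β hβ).2.2.1 x, hhfun]
          simp only [htbeq]
        rw [he]
        exact (hcc β hβ).2.2.2 x
      · have htbeq : tb β = -(cc β β) := by
          rw [htb]
          simp only [if_neg hev]
          rw [abs_of_pos hlt]
        push_neg at hev
        obtain ⟨i₀, hi₀⟩ := hev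
        have he : hfun β x = g β (fun i => if i = i₀ then -(x i) else x i) := by
          rw [(hcc β hβ).2.2.1]
          simp only [hhfun]
          congr 1
          · refine Finset.sum_congr rfl fun α hα => ?_
            rw [monom_flip']
            rcases ((hcc β hβ).1 α hα).lt_or_eq with hc | hc
            · have heα : ∀ i, Even (α i) := by
                by_contra hno
                exact absurd ((hcc β hβ).2.1 α hα hno) (ne_of_gt hc)
              rw [(heα i₀).neg_one_pow]
              ring
            · rw [← hc]
              ring
          · rw [monom_flip', (Nat.not_even_iff_odd.mp hi₀).neg_one_pow, htbeq]
            ring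
        rw [he]
        exact (hcc β hβ).2.2.2 _
  -- the coefficients of p in terms of the decomposition
  have hgT : ∀ β ∈ T, ∀ x, g β x = ∑ α ∈ T, cc β α * monom α x := by
    intro β hβ x
    rw [(hcc β hβ).2.2.1 x]
    exact Finset.sum_erase_add T _ hβ
  have hpD : ∀ x, p x = ∑ α ∈ T, (∑ β ∈ T, cc β α) * monom α x := by
    intro x
    rw [hg2 x, Finset.sum_congr rfl (fun β hβ => hgT β hβ x), Finset.sum_comm]
    exact Finset.sum_congr rfl fun α _ => (Finset.sum_mul _ _ _).symm
  have hdiff : ∀ x, ∑ α ∈ T, (c α - ∑ β ∈ T, cc β α) * monom α x = 0 := by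
    intro x
    have h1 : ∑ α ∈ T, (c α - ∑ β ∈ T, cc β α) * monom α x
        = (∑ α ∈ T, c α * monom α x) - ∑ α ∈ T, (∑ β ∈ T, cc β α) * monom α x := by
      rw [← Finset.sum_sub_distrib]
      exact Finset.sum_congr rfl fun α _ => by ring
    rw [h1, ← hp x, ← hpD x, sub_self]
  have hcD : ∀ α ∈ T, c α = ∑ β ∈ T, cc β α := by
    intro α hα
    have := monom_indep' T _ hdiff α hα
    linarith
  have hsumsplit : ∀ γ ∈ T, ∑ β ∈ T, cc β γ = cc γ γ + ∑ β ∈ T.erase γ, cc β γ :=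
    fun γ hγ => (Finset.add_sum_erase T (fun β => cc β γ) hγ).symm
  have hccerase0 : ∀ γ ∈ T, (¬ ∀ i, Even (γ i)) → ∀ β ∈ T.erase γ, cc β γ = 0 := by
    intro γ hγ hne β hβ
    have hβT : β ∈ T := Finset.mem_of_mem_erase hβ
    have hβne : β ≠ γ := Finset.ne_of_mem_erase hβ
    exact (hcc β hβT).2.1 γ (Finset.mem_erase.mpr ⟨fun h => hβne h.symm, hγ⟩) hne
  have hnev : ∀ γ ∈ T, (¬ ∀ i, Even (γ i)) → c γ = cc γ γ := by
    intro γ hγ hne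
    rw [hcD γ hγ, hsumsplit γ hγ, Finset.sum_eq_zero (hccerase0 γ hγ hne), add_zero]
  -- ptil equals the sum of the nonnegative pieces
  have hfunT : ∀ β ∈ T, ∀ x,
      hfun β x = ∑ α ∈ T, (if α = β then tb β else cc β α) * monom α x := by
    intro β hβ x
    rw [hhfun]
    simp only []
    rw [← Finset.sum_erase_add T (fun α => (if α = β then tb β else cc β α) * monom α x) hβ]
    congr 1
    · refine Finset.sum_congr rfl fun α hα => ?_
      rw [if_neg (Finset.ne_of_mem_erase hα)]
    · rw [if_pos rfl]
  have hptilh : ∀ x, ptil x = ∑ β ∈ T, hfun β x := by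
    intro x
    rw [Finset.sum_congr rfl (fun β hβ => hfunT β hβ x), Finset.sum_comm, hptil x]
    refine Finset.sum_congr rfl fun α hα => ?_
    rw [← Finset.sum_mul]
    congr 1
    have hsplit : ∑ β ∈ T, (if α = β then tb β else cc β α)
        = tb α + ∑ β ∈ T.erase α, cc β α := by
      rw [← Finset.add_sum_erase T (fun β => if α = β then tb β else cc β α) hα]
      congr 1
      · rw [if_pos rfl]
      · refine Finset.sum_congr rfl fun β hβ => ?_
        rw [if_neg (fun h => (Finset.ne_of_mem_erase hβ) h.symm)]
    rw [hsplit]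
    by_cases hev : ∀ i, Even (α i)
    · rw [if_pos hev, hcD α hα, hsumsplit α hα]
      congr 1
      rw [htb]
      simp only [if_pos hev]
    · rw [if_neg hev, Finset.sum_eq_zero (hccerase0 α hα hev), add_zero, hnev α hα hev, htb]
      simp only [if_neg hev]
  constructor
  -- Part (1)
  · intro hne
    have hpωx : ∀ x, pω x = ∑ γ ∈ T, (c γ * ∏ i, ω i ^ γ i) * monom γ x := by
      intro x
      rw [hpω x, hp]
      refine Finset.sum_congr rfl fun γ _ => ?_
      rw [monom_mul_left']
      ring
    set e : (Fin n → ℕ) → ℝ :=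
      fun γ => c γ * (∏ i, ω i ^ γ i) - (if (∀ i, Even (γ i)) then c γ else -|c γ|) with he
    have he0 : ∀ γ, 0 ≤ e γ := by
      intro γ
      rw [he]
      simp only []
      by_cases hev : ∀ i, Even (γ i)
      · rw [if_pos hev, sign_prod_even' ω hω γ hev, mul_one, sub_self]
      · rw [if_neg hev]
        rcases sign_prod_cases' ω hω γ with h1 | h1
        · rw [h1, mul_one]
          have := neg_abs_le (c γ)
          linarith
        · rw [h1]
          have := le_abs_self (c γ)
          linarith
    have hex : ∃ γ₀ ∈ T, 0 < e γ₀ := by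
      by_contra hcon
      push_neg at hcon
      apply hne
      funext x
      rw [hpωx x, hptil x]
      refine Finset.sum_congr rfl fun γ hγ => ?_
      have h1 : e γ = 0 := le_antisymm (hcon γ hγ) (he0 γ)
      rw [he] at h1
      simp only [] at h1
      have h2 : c γ * (∏ i, ω i ^ γ i) = (if (∀ i, Even (γ i)) then c γ else -|c γ|) := by
        linarith
      rw [h2]
    obtain ⟨γ₀, hγ₀T, hγ₀⟩ := hex
    rw [Set.eq_empty_iff_forall_notMem]
    rintro x ⟨hxpos, hx0⟩
    have h1 : 0 ≤ ptil x := by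
      rw [hptilh x]
      exact Finset.sum_nonneg fun β hβ => hhnn β hβ x
    have h2 : pω x = ptil x + ∑ γ ∈ T, e γ * monom γ x := by
      rw [hpωx x, hptil x, ← Finset.sum_add_distrib]
      refine Finset.sum_congr rfl fun γ _ => ?_
      rw [he]
      ring
    have h3 : e γ₀ * monom γ₀ x ≤ ∑ γ ∈ T, e γ * monom γ x :=
      Finset.single_le_sum (f := fun γ => e γ * monom γ x)
        (fun γ _ => mul_nonneg (he0 γ) (monom_pos' hxpos).le) hγ₀T
    have h4 : 0 < e γ₀ * monom γ₀ x := mul_pos hγ₀ (monom_pos' hxpos)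
    rw [hx0] at h2
    linarith
  -- Part (2)
  · intro heq
    have hseteq : {x : Fin n → ℝ | (∀ i, 0 < x i) ∧ pω x = 0}
        = {x : Fin n → ℝ | (∀ i, 0 < x i) ∧ ptil x = 0} := by rw [heq]
    refine ⟨hseteq, ?_⟩
    rintro ⟨xs, hxspos, hxs0⟩
    have hptilxs : ptil xs = 0 := by rw [← congrFun heq xs]; exact hxs0
    have hz : ∀ β ∈ T, hfun β xs = 0 := by
      have h := hptilxs
      rw [hptilh xs] at h
      intro β hβ
      exact (Finset.sum_eq_zero_iff_of_nonneg (fun β' hβ' => hhnn β' hβ' xs)).mp h β hβ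
    set Cond : (Fin n → ℝ) → Prop := fun d => ∀ β ∈ T, ∀ α ∈ T.erase β, 0 < cc β α →
        ∑ i, ((α i : ℝ) - (β i : ℝ)) * d i = 0 with hCondDef
    have hchar : ∀ x : Fin n → ℝ, (∀ i, 0 < x i) →
        (pω x = 0 ↔ Cond (fun i => Real.log (x i) - Real.log (xs i))) := by
      intro x hx
      have h1 : pω x = 0 ↔ ∀ β ∈ T, hfun β x = 0 := by
        rw [congrFun heq x, hptilh x]
        exact Finset.sum_eq_zero_iff_of_nonneg (fun β hβ => hhnn β hβ x)
      rw [h1, hCondDef]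
      constructor
      · intro hall β hβ α hα hcα
        exact ((ag_zero' (T.erase β) β (cc β) ((hcc β hβ).1) (tb β) (hfun β) (fun _ => rfl)
          (hhnn β hβ) xs hxspos (hz β hβ) x hx).mp (hall β hβ)) α hα hcα
      · intro hC β hβ
        exact (ag_zero' (T.erase β) β (cc β) ((hcc β hβ).1) (tb β) (hfun β) (fun _ => rfl)
          (hhnn β hβ) xs hxspos (hz β hβ) x hx).mpr (fun α hα hcα => hC β hβ α hα hcα)
    have hCsub : ∀ d1 d2, Cond d1 → Cond d2 → Cond (fun i => d1 i - d2 i) := by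
      intro d1 d2 h1 h2 β hβ α hα hcα
      have e1 := h1 β hβ α hα hcα
      have e2 := h2 β hβ α hα hcα
      have h3 : ∑ i, ((α i : ℝ) - (β i : ℝ)) * (d1 i - d2 i)
          = (∑ i, ((α i : ℝ) - (β i : ℝ)) * d1 i) - ∑ i, ((α i : ℝ) - (β i : ℝ)) * d2 i := by
        rw [← Finset.sum_sub_distrib]
        exact Finset.sum_congr rfl fun i _ => by ring
      rw [h3, e1, e2, sub_self]
    have hCadd : ∀ d1 d2, Cond d1 → Cond d2 → Cond (fun i => d1 i + d2 i) := by
      intro d1 d2 h1 h2 β hβ α hα hcα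
      have e1 := h1 β hβ α hα hcα
      have e2 := h2 β hβ α hα hcα
      have h3 : ∑ i, ((α i : ℝ) - (β i : ℝ)) * (d1 i + d2 i)
          = (∑ i, ((α i : ℝ) - (β i : ℝ)) * d1 i) + ∑ i, ((α i : ℝ) - (β i : ℝ)) * d2 i := by
        rw [← Finset.sum_add_distrib]
        exact Finset.sum_congr rfl fun i _ => by ring
      rw [h3, e1, e2, add_zero]
    have hCsmul : ∀ (r : ℝ) d, Cond d → Cond (fun i => r * d i) := by
      intro r d hd β hβ α hα hcα
      have e1 := hd β hβ α hα hcα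
      have h3 : ∑ i, ((α i : ℝ) - (β i : ℝ)) * (r * d i)
          = r * ∑ i, ((α i : ℝ) - (β i : ℝ)) * d i := by
        rw [Finset.mul_sum]
        exact Finset.sum_congr rfl fun i _ => by ring
      rw [h3, e1, mul_zero]
    have hC0 : Cond (fun _ => (0:ℝ)) := by
      intro β hβ α hα hcα
      simp
    have hptilsym : ∀ σ : Equiv.Perm (Fin n), ∀ x, ptil (permAct σ x) = ptil x := by
      intro σ x
      rw [hptil, hptil]
      exact ptil_symm T c p hp hsym σ x
    have hCxs : ∀ σ : Equiv.Perm (Fin n),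
        Cond (fun i => Real.log (xs (σ⁻¹ i)) - Real.log (xs i)) := by
      intro σ
      have hxs0' : pω (permAct σ xs) = 0 := by
        rw [congrFun heq _, hptilsym σ xs]
        exact hptilxs
      exact (hchar _ (fun i => hxspos _)).mp hxs0'
    have hCperm : ∀ (σ : Equiv.Perm (Fin n)) d, Cond d → Cond (fun i => d (σ⁻¹ i)) := by
      intro σ d hd
      set x : Fin n → ℝ := fun i => Real.exp (Real.log (xs i) + d i) with hxdef
      have hxpos : ∀ i, 0 < x i := fun i => Real.exp_pos _
      have hdlog : ∀ i, Real.log (x i) - Real.log (xs i) = d i := by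
        intro i
        rw [hxdef]
        simp only [Real.log_exp]
        ring
      have hx0 : pω x = 0 := by
        apply (hchar x hxpos).mpr
        have hfe : (fun i => Real.log (x i) - Real.log (xs i)) = d := funext hdlog
        rw [hfe]
        exact hd
      have hx0' : pω (permAct σ x) = 0 := by
        rw [congrFun heq _, hptilsym σ x, ← congrFun heq x]
        exact hx0
      have hCc := (hchar _ (fun i => hxpos (σ⁻¹ i))).mp hx0'
      have hCw := hCxs σ
      have hres := hCsub _ _ hCc hCw
      have hfe : (fun i => Real.log (x (σ⁻¹ i)) - Real.log (xs i)
          - (Real.log (xs (σ⁻¹ i)) - Real.log (xs i))) = fun i => d (σ⁻¹ i) := by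
        funext i
        have := hdlog (σ⁻¹ i)
        linarith
      rw [hfe] at hres
      exact hres
    set i0 : Fin n := ⟨0, hn⟩ with hi0def
    by_cases hdiag : ∀ d, Cond d → ∀ i j, d i = d j
    · -- diagonal cases
      have hxsdiag : ∀ i j : Fin n, xs i = xs j := by
        intro i j
        set w : Fin n → ℝ :=
          fun k => Real.log (xs ((Equiv.swap i j)⁻¹ k)) - Real.log (xs k) with hwdef
        have hCw := hCxs (Equiv.swap i j)
        have hall := hdiag _ hCw
        have hsum0 : ∑ k, w k = 0 := by
          rw [hwdef]
          simp only []
          rw [Finset.sum_sub_distrib]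
          rw [Equiv.sum_comp (Equiv.swap i j)⁻¹ (fun k => Real.log (xs k))]
          exact sub_self _
        have hconst : ∀ k, w k = w i := fun k => hall k i
        have hcard : ∑ k, w k = (n : ℝ) * w i := by
          rw [Finset.sum_congr rfl (fun k _ => hconst k)]
          rw [Finset.sum_const, Finset.card_univ, Fintype.card_fin, nsmul_eq_mul]
        have hwi : w i = 0 := by
          have hne : (n : ℝ) ≠ 0 := Nat.cast_ne_zero.mpr hn.ne'
          have := hsum0
          rw [hcard] at this
          exact (mul_eq_zero.mp this).resolve_left hne
        have hlog : Real.log (xs j) = Real.log (xs i) := by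
          rw [hwdef] at hwi
          simp only [Equiv.swap_inv, Equiv.swap_apply_left] at hwi
          linarith
        calc xs i = Real.exp (Real.log (xs i)) := (Real.exp_log (hxspos i)).symm
          _ = Real.exp (Real.log (xs j)) := by rw [hlog]
          _ = xs j := Real.exp_log (hxspos j)
      by_cases hone : Cond (fun _ : Fin n => (1:ℝ))
      · -- case (b) : the positive diagonal
        right; left
        ext x
        simp only [Set.mem_setOf_eq]
        constructor
        · rintro ⟨hxpos, hx0⟩
          have hC := (hchar x hxpos).mp hx0
          have hall := hdiag _ hC
          refine ⟨x i0, hxpos i0, funext fun i => ?_⟩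
          have h1 := hall i i0
          have h2 : xs i = xs i0 := hxsdiag i i0
          have h3 : Real.log (x i) = Real.log (x i0) := by
            rw [h2] at h1
            linarith
          calc x i = Real.exp (Real.log (x i)) := (Real.exp_log (hxpos i)).symm
            _ = Real.exp (Real.log (x i0)) := by rw [h3]
            _ = x i0 := Real.exp_log (hxpos i0)
        · rintro ⟨t, ht, rfl⟩
          refine ⟨fun _ => ht, ?_⟩
          apply (hchar _ (fun _ => ht)).mpr
          have hfe : (fun i => Real.log ((fun _ : Fin n => t) i) - Real.log (xs i))
              = fun i => (Real.log t - Real.log (xs i0)) * 1 := by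
            funext i
            rw [hxsdiag i i0]
            ring
          rw [hfe]
          exact hCsmul _ _ hone
      · -- case (a) : a single diagonal point
        left
        refine ⟨xs i0, hxspos i0, ?_⟩
        have hxsconst : xs = fun _ => xs i0 := funext fun i => hxsdiag i i0
        ext x
        simp only [Set.mem_setOf_eq, Set.mem_singleton_iff]
        constructor
        · rintro ⟨hxpos, hx0⟩
          have hC := (hchar x hxpos).mp hx0
          have hall := hdiag _ hC
          set r : ℝ := Real.log (x i0) - Real.log (xs i0) with hrdef
          have hdr : ∀ i, Real.log (x i) - Real.log (xs i) = r := fun i => hall i i0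
          have hr0 : r = 0 := by
            by_contra hrne
            apply hone
            have h1 : Cond (fun i => r⁻¹ * ((fun i => Real.log (x i) - Real.log (xs i)) i)) :=
              hCsmul r⁻¹ _ hC
            have hfe : (fun i => r⁻¹ * ((fun i => Real.log (x i) - Real.log (xs i)) i))
                = fun _ : Fin n => (1:ℝ) := by
              funext i
              simp only []
              rw [hdr i]
              field_simp
            rw [hfe] at h1
            exact h1
          funext i
          have h1 := hdr i
          rw [hr0] at h1
          have h2 : Real.log (x i) = Real.log (xs i) := by linarith
          calc x i = Real.exp (Real.log (x i)) := (Real.exp_log (hxpos i)).symm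
            _ = Real.exp (Real.log (xs i)) := by rw [h2]
            _ = xs i := Real.exp_log (hxspos i)
            _ = xs i0 := hxsdiag i i0
        · rintro rfl
          constructor
          · intro i
            exact hxspos i0
          · rw [← hxsconst]
            exact hxs0
    · -- case (c) : a product hypersurface
      right; right
      push_neg at hdiag
      obtain ⟨d0, hd0C, i1, j1, hne0⟩ := hdiag
      have hij1 : i1 ≠ j1 := fun h => hne0 (by rw [h])
      set E : Fin n → Fin n → (Fin n → ℝ) :=
        fun i j k => (if k = i then (1:ℝ) else 0) - (if k = j then 1 else 0) with hE
      have hCE0 : Cond (E i1 j1) := by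
        have hsw := hCperm (Equiv.swap i1 j1) d0 hd0C
        have hs1 := hCsub _ _ hd0C hsw
        have hs2 := hCsmul (d0 i1 - d0 j1)⁻¹ _ hs1
        have hfe : (fun i => (d0 i1 - d0 j1)⁻¹ *
            ((fun i => d0 i - d0 ((Equiv.swap i1 j1)⁻¹ i)) i)) = E i1 j1 := by
          funext k
          simp only [Equiv.swap_inv, hE]
          by_cases h1 : k = i1
          · subst h1
            rw [Equiv.swap_apply_left, if_pos rfl, if_neg hij1]
            rw [inv_mul_eq_div, div_eq_iff (sub_ne_zero.mpr hne0)]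
            ring
          · by_cases h2 : k = j1
            · subst h2
              rw [Equiv.swap_apply_right, if_neg h1, if_pos rfl]
              rw [inv_mul_eq_div, div_eq_iff (sub_ne_zero.mpr hne0)]
              ring
            · rw [Equiv.swap_apply_of_ne_of_ne h1 h2, if_neg h1, if_neg h2]
              ring_nf
        rw [hfe] at hs2
        exact hs2
      have hCEall : ∀ i j : Fin n, Cond (E i j) := by
        intro i j
        rcases eq_or_ne i j with rfl | hij
        · have hfe : E i i = fun _ => (0:ℝ) := by
            funext k
            simp [hE]
          rw [hfe]
          exact hC0
        · obtain ⟨σ, hσi, hσj⟩ : ∃ σ : Equiv.Perm (Fin n), σ i1 = i ∧ σ j1 = j := by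
            refine ⟨Equiv.swap (Equiv.swap i1 i j1) j * Equiv.swap i1 i, ?_, ?_⟩
            · rw [Equiv.Perm.mul_apply, Equiv.swap_apply_left]
              apply Equiv.swap_apply_of_ne_of_ne
              · intro h
                apply hij1
                apply (Equiv.swap i1 i).injective
                rw [Equiv.swap_apply_left, ← h]
              · exact hij
            · rw [Equiv.Perm.mul_apply, Equiv.swap_apply_left]
          have hres := hCperm σ _ hCE0
          have hfe : (fun k => E i1 j1 (σ⁻¹ k)) = E i j := by
            funext k
            simp only [hE]
            have e1 : (σ⁻¹ k = i1) ↔ (k = i) := by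
              rw [Equiv.Perm.inv_eq_iff_eq, hσi]
            have e2 : (σ⁻¹ k = j1) ↔ (k = j) := by
              rw [Equiv.Perm.inv_eq_iff_eq, hσj]
            congr 1
            · exact if_congr e1 rfl rfl
            · exact if_congr e2 rfl rfl
          rw [hfe] at hres
          exact hres
      have hCsumF : ∀ (F : Fin n → (Fin n → ℝ)), (∀ k, Cond (F k)) →
          Cond (fun m => ∑ k, F k m) := by
        intro F hF β hβ α hα hcα
        have h3 : ∑ i, ((α i : ℝ) - (β i : ℝ)) * (∑ k, F k i)
            = ∑ k : Fin n, ∑ i, ((α i : ℝ) - (β i : ℝ)) * F k i := by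
          rw [Finset.sum_congr rfl (fun i (_ : i ∈ univ) => Finset.mul_sum _ _ _)]
          exact Finset.sum_comm
        rw [h3]
        exact Finset.sum_eq_zero fun k _ => hF k β hβ α hα hcα
      have hCzero_sum : ∀ d : Fin n → ℝ, (∑ i, d i) = 0 → Cond d := by
        intro d hsum
        have hrep : d = fun m => ∑ k, d k * E k i0 m := by
          funext m
          simp only [hE]
          have h1 : ∑ k, d k * ((if m = k then (1:ℝ) else 0) - (if m = i0 then 1 else 0))
              = (∑ k, d k * (if m = k then (1:ℝ) else 0))
                - ∑ k, d k * (if m = i0 then (1:ℝ) else 0) := by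
            rw [← Finset.sum_sub_distrib]
            exact Finset.sum_congr rfl fun k _ => by ring
          have h2 : ∑ k, d k * (if m = k then (1:ℝ) else 0) = d m := by
            have hper : ∀ k : Fin n, d k * (if m = k then (1:ℝ) else 0)
                = if m = k then d k else 0 := by
              intro k; split <;> simp
            rw [Finset.sum_congr rfl (fun k _ => hper k), Finset.sum_ite_eq]
            simp
          have h3 : ∑ k, d k * (if m = i0 then (1:ℝ) else 0) = 0 := by
            by_cases hm : m = i0
            · rw [Finset.sum_congr rfl (fun k (_ : k ∈ univ) => by rw [if_pos hm, mul_one])]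
              exact hsum
            · rw [Finset.sum_congr rfl (fun k (_ : k ∈ univ) => by rw [if_neg hm, mul_zero])]
              exact Finset.sum_const_zero
          rw [h1, h2, h3, sub_zero]
        rw [hrep]
        exact hCsumF _ (fun k => hCsmul (d k) _ (hCEall k i0))
      have hvex : ∃ β₀ ∈ T, ∃ α₀ ∈ T.erase β₀, 0 < cc β₀ α₀ := by
        by_contra hcon
        push_neg at hcon
        apply hnc
        refine ⟨0, fun x => ?_⟩
        have hccz : ∀ β ∈ T, ∀ α ∈ T.erase β, cc β α = 0 :=
          fun β hβ α hα => le_antisymm (hcon β hβ α hα) ((hcc β hβ).1 α hα)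
        have htb0 : ∀ β ∈ T, tb β = 0 := by
          intro β hβ
          have h1 : hfun β xs = tb β * monom β xs := by
            rw [hhfun]
            simp only []
            rw [Finset.sum_eq_zero (fun α hα => by rw [hccz β hβ α hα, zero_mul]), zero_add]
          have h2 := hz β hβ
          rw [h1] at h2
          rcases mul_eq_zero.mp h2 with h | h
          · exact h
          · exact absurd h (monom_pos' hxspos).ne'
        have hptil00 : ∀ y, ptil y = 0 := by
          intro y
          rw [hptilh y]
          refine Finset.sum_eq_zero fun β hβ => ?_
          rw [hhfun]
          simp only []
          rw [Finset.sum_eq_zero (fun α hα => by rw [hccz β hβ α hα, zero_mul]), zero_add,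
            htb0 β hβ, zero_mul]
        have hpx : p x = pω (fun i => ω i * x i) := by
          rw [hpω (fun i => ω i * x i)]
          congr 1
          exact (hωinv x).symm
        rw [hpx, congrFun heq _, hptil00]
      obtain ⟨β₀, hβ₀, α₀, hα₀, hcα₀⟩ := hvex
      have hi2ex : ∃ i2 : Fin n, ((α₀ i2 : ℝ) - (β₀ i2 : ℝ)) ≠ 0 := by
        have hne : α₀ ≠ β₀ := Finset.ne_of_mem_erase hα₀
        obtain ⟨i2, hne2⟩ := Function.ne_iff.mp hne
        refine ⟨i2, fun hc => hne2 ?_⟩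
        have hcast : (α₀ i2 : ℝ) = (β₀ i2 : ℝ) := by linarith
        exact_mod_cast hcast
      obtain ⟨i2, hi2⟩ := hi2ex
      have hCond_sum0 : ∀ d, Cond d → ∑ i, d i = 0 := by
        intro d hd
        by_contra hs
        set r : ℝ := ∑ i, d i with hrdef
        have h1 : Cond (fun i => d i - r / n) := by
          apply hCzero_sum
          rw [Finset.sum_sub_distrib, Finset.sum_const, Finset.card_univ, Fintype.card_fin,
            nsmul_eq_mul, ← hrdef]
          have hnne : (n:ℝ) ≠ 0 := Nat.cast_ne_zero.mpr hn.ne'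
          field_simp
          ring
        have h2 : Cond (fun _ : Fin n => r / n) := by
          have h3 := hCsub _ _ hd h1
          have hfe : (fun i => d i - (fun i => d i - r / n) i) = fun _ : Fin n => r / n := by
            funext i
            simp only []
            ring
          rw [hfe] at h3
          exact h3
        have hrn : r / n ≠ 0 := div_ne_zero hs (Nat.cast_ne_zero.mpr hn.ne')
        have hone : Cond (fun _ : Fin n => (1:ℝ)) := by
          have h3 := hCsmul (r/n)⁻¹ _ h2
          have hfe : (fun i => (r/n)⁻¹ * ((fun _ : Fin n => r / n) i))
              = fun _ : Fin n => (1:ℝ) := by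
            funext i
            simp only []
            rw [inv_mul_cancel₀ hrn]
          rw [hfe] at h3
          exact h3
        have hem : Cond (fun k => if k = i2 then (1:ℝ) else 0) := by
          have hp1 : Cond (fun k => (if k = i2 then (1:ℝ) else 0) - 1/n) := by
            apply hCzero_sum
            rw [Finset.sum_sub_distrib]
            have hh : ∑ k : Fin n, (if k = i2 then (1:ℝ) else 0) = 1 := by
              rw [Finset.sum_ite_eq' univ i2 (fun _ => (1:ℝ))]
              simp
            rw [hh, Finset.sum_const, Finset.card_univ, Fintype.card_fin, nsmul_eq_mul]
            have hnne : (n:ℝ) ≠ 0 := Nat.cast_ne_zero.mpr hn.ne'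
            field_simp
            ring
          have hp2 : Cond (fun _ : Fin n => (1/n : ℝ)) := by
            have h3 := hCsmul (1/n) _ hone
            have hfe : (fun i => (1/n : ℝ) * ((fun _ : Fin n => (1:ℝ)) i))
                = fun _ : Fin n => (1/n : ℝ) := by
              funext i
              simp
            rw [hfe] at h3
            exact h3
          have h3 := hCadd _ _ hp1 hp2
          have hfe : (fun i => (fun k => (if k = i2 then (1:ℝ) else 0) - 1/n) i
              + (fun _ : Fin n => (1/n : ℝ)) i) = fun k => if k = i2 then (1:ℝ) else 0 := by
            funext i
            simp only []
            ring
          rw [hfe] at h3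
          exact h3
        have hfin := hem β₀ hβ₀ α₀ hα₀ hcα₀
        have hval : ∑ i, ((α₀ i : ℝ) - (β₀ i : ℝ)) * (if i = i2 then (1:ℝ) else 0)
            = (α₀ i2 : ℝ) - (β₀ i2 : ℝ) := by
          have hper : ∀ i : Fin n, ((α₀ i : ℝ) - (β₀ i : ℝ)) * (if i = i2 then (1:ℝ) else 0)
              = if i = i2 then ((α₀ i : ℝ) - (β₀ i : ℝ)) else 0 := by
            intro i; split <;> simp
          rw [Finset.sum_congr rfl (fun i _ => hper i),
            Finset.sum_ite_eq' univ i2 (fun i => ((α₀ i : ℝ) - (β₀ i : ℝ)))]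
          simp
        rw [hval] at hfin
        exact hi2 hfin
      refine ⟨∏ i, xs i, Finset.prod_pos (fun i _ => hxspos i), ?_⟩
      have hexplog : ∀ (y : Fin n → ℝ), (∀ i, 0 < y i) →
          ∏ i, y i = Real.exp (∑ i, Real.log (y i)) := by
        intro y hy
        rw [Real.exp_sum]
        exact Finset.prod_congr rfl fun i _ => (Real.exp_log (hy i)).symm
      ext x
      simp only [Set.mem_setOf_eq]
      constructor
      · rintro ⟨hxpos, hx0⟩
        refine ⟨hxpos, ?_⟩
        have hC := (hchar x hxpos).mp hx0
        have hsum := hCond_sum0 _ hC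
        rw [Finset.sum_sub_distrib] at hsum
        have h1 : ∑ i, Real.log (x i) = ∑ i, Real.log (xs i) := by linarith
        rw [hexplog x hxpos, hexplog xs hxspos, h1]
      · rintro ⟨hxpos, hprod⟩
        refine ⟨hxpos, ?_⟩
        apply (hchar x hxpos).mpr
        apply hCzero_sum
        rw [Finset.sum_sub_distrib]
        rw [← Real.log_prod (fun i _ => (hxpos i).ne'),
          ← Real.log_prod (fun i _ => (hxspos i).ne'), hprod, sub_self]
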